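/- Let M be an n×n matrix over ℚ[t,t⁻¹] all of whose entries are nonzero Laurent polynomials with positive coefficients, and suppose some entry of M has spread at least one. Then every entry of M^3 has spread at least one. -/

import Mathlib

noncomputable def spread (p : LaurentPolynomial ℚ) : ℤ :=
  WithBot.unbotD 0 p.coeff.support.max - WithTop.untopD 0 p.coeff.support.min

def PosCoeffs (p : LaurentPolynomial ℚ) : Prop := ∀ m ∈ p.coeff.support, 0 < p.coeff m

namespace Stmt5Aux

open Finset

lemma coeff_nonneg {p : LaurentPolynomial ℚ} (hp : PosCoeffs p) (m : ℤ) : 0 ≤ p.coeff m := by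
  by_cases h : m ∈ p.coeff.support
  · exact (hp m h).le
  · rw [Finsupp.notMem_support_iff.mp h]

lemma posCoeffs_add {p q : LaurentPolynomial ℚ} (hp : PosCoeffs p) (hq : PosCoeffs q) :
    PosCoeffs (p + q) := by
  intro m hm
  have := Finsupp.mem_support_iff.mp hm
  rw [AddMonoidAlgebra.coeff_add, Finsupp.add_apply] at this ⊢
  exact lt_of_le_of_ne (add_nonneg (coeff_nonneg hp m) (coeff_nonneg hq m)) (Ne.symm this)

lemma add_ne_zero' {p q : LaurentPolynomial ℚ} (hp0 : p ≠ 0) (hp : PosCoeffs p)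
    (hq : PosCoeffs q) : p + q ≠ 0 := by
  obtain ⟨m, hm⟩ := Finsupp.support_nonempty_iff.mpr (AddMonoidAlgebra.coeff_eq_zero.not.mpr hp0)
  have hpos : 0 < (p + q).coeff m := by
    rw [AddMonoidAlgebra.coeff_add, Finsupp.add_apply]
    exact add_pos_of_pos_of_nonneg (hp m hm) (coeff_nonneg hq m)
  intro h
  rw [h] at hpos
  simp at hpos

lemma coeff_mul_nonneg {p q : LaurentPolynomial ℚ} (hp : PosCoeffs p) (hq : PosCoeffs q)
    (x : ℤ) : 0 ≤ (p * q).coeff x := by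
  classical
  rw [AddMonoidAlgebra.mul_apply]
  simp only [Finsupp.sum]
  apply Finset.sum_nonneg
  intro a _
  apply Finset.sum_nonneg
  intro b _
  split
  · exact mul_nonneg (coeff_nonneg hp a) (coeff_nonneg hq b)
  · exact le_refl 0

lemma posCoeffs_mul {p q : LaurentPolynomial ℚ} (hp : PosCoeffs p) (hq : PosCoeffs q) :
    PosCoeffs (p * q) := by
  intro m hm
  exact lt_of_le_of_ne (coeff_mul_nonneg hp hq m) (Ne.symm (Finsupp.mem_support_iff.mp hm))

lemma coeff_mul_pos {p q : LaurentPolynomial ℚ} (hp : PosCoeffs p) (hq : PosCoeffs q)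
    {a b : ℤ} (ha : a ∈ p.coeff.support) (hb : b ∈ q.coeff.support) : 0 < (p * q).coeff (a + b) := by
  classical
  rw [AddMonoidAlgebra.mul_apply]
  simp only [Finsupp.sum]
  apply Finset.sum_pos'
  · intro i _
    apply Finset.sum_nonneg
    intro j _
    split
    · exact mul_nonneg (coeff_nonneg hp i) (coeff_nonneg hq j)
    · exact le_refl 0
  · refine ⟨a, ha, Finset.sum_pos' ?_ ⟨b, hb, ?_⟩⟩
    · intro j _
      split
      · exact mul_nonneg (coeff_nonneg hp a) (coeff_nonneg hq j)
      · exact le_refl 0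
    · rw [if_pos rfl]
      exact mul_pos (hp a ha) (hq b hb)

/-- spread for nonzero p in terms of max'/min'. -/
lemma spread_eq {p : LaurentPolynomial ℚ} (hp : p ≠ 0) :
    spread p = p.coeff.support.max' (Finsupp.support_nonempty_iff.mpr (AddMonoidAlgebra.coeff_eq_zero.not.mpr hp))
      - p.coeff.support.min' (Finsupp.support_nonempty_iff.mpr (AddMonoidAlgebra.coeff_eq_zero.not.mpr hp)) := by
  have h := Finsupp.support_nonempty_iff.mpr (AddMonoidAlgebra.coeff_eq_zero.not.mpr hp)
  unfold spread
  rw [← Finset.coe_max' h, ← Finset.coe_min' h]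
  rfl

lemma spread_nonneg {p : LaurentPolynomial ℚ} (hp : p ≠ 0) : 0 ≤ spread p := by
  rw [spread_eq hp]
  have := Finset.min'_le p.coeff.support _ (p.coeff.support.max'_mem (Finsupp.support_nonempty_iff.mpr (AddMonoidAlgebra.coeff_eq_zero.not.mpr hp)))
  omega

lemma spread_mul_ge {p q : LaurentPolynomial ℚ} (hp0 : p ≠ 0) (hq0 : q ≠ 0)
    (hp : PosCoeffs p) (hq : PosCoeffs q) :
    spread p + spread q ≤ spread (p * q) := by
  have hP := Finsupp.support_nonempty_iff.mpr (AddMonoidAlgebra.coeff_eq_zero.not.mpr hp0)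
  have hQ := Finsupp.support_nonempty_iff.mpr (AddMonoidAlgebra.coeff_eq_zero.not.mpr hq0)
  have hpq0 : p * q ≠ 0 := mul_ne_zero hp0 hq0
  have hPQ := Finsupp.support_nonempty_iff.mpr (AddMonoidAlgebra.coeff_eq_zero.not.mpr hpq0)
  rw [spread_eq hp0, spread_eq hq0, spread_eq hpq0]
  have hmax : p.coeff.support.max' hP + q.coeff.support.max' hQ ≤ (p * q).coeff.support.max' hPQ := by
    apply Finset.le_max'
    exact Finsupp.mem_support_iff.mpr
      (coeff_mul_pos hp hq (p.coeff.support.max'_mem hP) (q.coeff.support.max'_mem hQ)).ne'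
  have hmin : (p * q).coeff.support.min' hPQ ≤ p.coeff.support.min' hP + q.coeff.support.min' hQ := by
    apply Finset.min'_le
    exact Finsupp.mem_support_iff.mpr
      (coeff_mul_pos hp hq (p.coeff.support.min'_mem hP) (q.coeff.support.min'_mem hQ)).ne'
  omega

lemma spread_add_left {p q : LaurentPolynomial ℚ} (hp0 : p ≠ 0)
    (hp : PosCoeffs p) (hq : PosCoeffs q) : spread p ≤ spread (p + q) := by
  have hs0 : p + q ≠ 0 := add_ne_zero' hp0 hp hq
  have hP := Finsupp.support_nonempty_iff.mpr (AddMonoidAlgebra.coeff_eq_zero.not.mpr hp0)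
  have hS := Finsupp.support_nonempty_iff.mpr (AddMonoidAlgebra.coeff_eq_zero.not.mpr hs0)
  have hsub : p.coeff.support ⊆ (p + q).coeff.support := by
    intro m hm
    apply Finsupp.mem_support_iff.mpr
    have : 0 < (p + q).coeff m := by
      rw [AddMonoidAlgebra.coeff_add, Finsupp.add_apply]
      exact add_pos_of_pos_of_nonneg (hp m hm) (coeff_nonneg hq m)
    exact this.ne'
  rw [spread_eq hp0, spread_eq hs0]
  have h1 : p.coeff.support.max' hP ≤ (p + q).coeff.support.max' hS :=
    Finset.le_max' _ _ (hsub (p.coeff.support.max'_mem hP))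
  have h2 : (p + q).coeff.support.min' hS ≤ p.coeff.support.min' hP :=
    Finset.min'_le _ _ (hsub (p.coeff.support.min'_mem hP))
  omega

def NZP (p : LaurentPolynomial ℚ) : Prop := p ≠ 0 ∧ PosCoeffs p

lemma nzp_mul {p q : LaurentPolynomial ℚ} (hp : NZP p) (hq : NZP q) : NZP (p * q) :=
  ⟨mul_ne_zero hp.1 hq.1, posCoeffs_mul hp.2 hq.2⟩

lemma nzp_add {p q : LaurentPolynomial ℚ} (hp : NZP p) (hq : NZP q) : NZP (p + q) :=
  ⟨add_ne_zero' hp.1 hp.2 hq.2, posCoeffs_add hp.2 hq.2⟩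

lemma nzp_sum {ι : Type*} (s : Finset ι) (f : ι → LaurentPolynomial ℚ)
    (hne : s.Nonempty) (h : ∀ i ∈ s, NZP (f i)) : NZP (∑ i ∈ s, f i) := by
  classical
  induction s using Finset.cons_induction with
  | empty => simp at hne
  | cons a s ha ih =>
    rw [Finset.sum_cons]
    rcases s.eq_empty_or_nonempty with rfl | hs
    · simpa using h a (by simp)
    · exact nzp_add (h a (Finset.mem_cons_self a s))
        (ih hs (fun i hi => h i (Finset.mem_cons_of_mem hi)))

lemma spread_le_sum {ι : Type*} (s : Finset ι) (f : ι → LaurentPolynomial ℚ)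
    {i : ι} (hi : i ∈ s) (h : ∀ j ∈ s, NZP (f j)) :
    spread (f i) ≤ spread (∑ j ∈ s, f j) := by
  classical
  rw [← Finset.add_sum_erase s f hi]
  rcases (s.erase i).eq_empty_or_nonempty with he | he
  · rw [he, Finset.sum_empty, add_zero]
  · have hrest := nzp_sum _ f he (fun j hj => h j (Finset.mem_of_mem_erase hj))
    exact spread_add_left (h i hi).1 (h i hi).2 hrest.2

end Stmt5Aux

set_option maxHeartbeats 1000000 in
open Stmt5Aux in
theorem stmt_5 (n : ℕ) (M : Matrix (Fin n) (Fin n) (LaurentPolynomial ℚ))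
    (h0 : ∀ i j, M i j ≠ 0) (hpos : ∀ i j, PosCoeffs (M i j))
    (hspread : ∃ i j, 1 ≤ spread (M i j)) :
    ∀ i j, 1 ≤ spread ((M ^ 3) i j) := by
  obtain ⟨a, b, hab⟩ := hspread
  intro i j
  have : Nonempty (Fin n) := ⟨i⟩
  have hM : ∀ k l, NZP (M k l) := fun k l => ⟨h0 k l, hpos k l⟩
  have hM2 : ∀ k l, NZP ((M * M) k l) := by
    intro k l
    rw [Matrix.mul_apply]
    exact nzp_sum _ _ Finset.univ_nonempty (fun m _ => nzp_mul (hM k m) (hM m l))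
  have hcube : M ^ 3 = M * M * M := by rw [pow_succ, pow_succ, pow_one]
  rw [hcube, Matrix.mul_apply]
  calc (1 : ℤ) ≤ spread (M a b) := hab
    _ ≤ spread (M i a) + spread (M a b) := by
        have := spread_nonneg (h0 i a); omega
    _ ≤ spread (M i a * M a b) := spread_mul_ge (h0 i a) (h0 a b) (hpos i a) (hpos a b)
    _ ≤ spread (∑ k, M i k * M k b) := by
        exact spread_le_sum _ (fun k => M i k * M k b) (Finset.mem_univ a) (fun k _ => nzp_mul (hM i k) (hM k b))
    _ = spread ((M * M) i b) := by rw [Matrix.mul_apply]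
    _ ≤ spread ((M * M) i b) + spread (M b j) := by
        have := spread_nonneg (h0 b j); omega
    _ ≤ spread ((M * M) i b * M b j) :=
        spread_mul_ge (hM2 i b).1 (h0 b j) (hM2 i b).2 (hpos b j)
    _ ≤ spread (∑ l, (M * M) i l * M l j) :=
        spread_le_sum _ (fun l => (M * M) i l * M l j) (Finset.mem_univ b) (fun l _ => nzp_mul (hM2 i l) (hM l j))
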